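/- Let E be a real inner product space, let 𝕄 be a normed ring, and let B be the open unit ball of E. Let A : E → (E →L[ℝ] 𝕄) be continuously differentiable on B and suppose A is in radial gauge, i.e. (A y) y = 0 for all y ∈ B. Define the curvature F of A by F y (a, b) = (fderiv A y a) b − (fderiv A y b) a + (A y a)·(A y b) − (A y b)·(A y a). If κ ≥ 0 is such that ‖F y (a, b)‖ ≤ κ ‖a‖ ‖b‖ for all y ∈ B and a, b ∈ E, then for all x ∈ B and v ∈ E, ‖(A x) v‖ ≤ κ ‖x‖ ‖v‖. -/

import Mathlib

open Metric Set

/-- A connection matrix `A` in radial gauge on the unit ball satisfies the pointwise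
bound `‖A(x)v‖ ≤ κ ‖x‖ ‖v‖`, where `κ` bounds the curvature
`F(y)(a,b) = (dA)_y(a)(b) - (dA)_y(b)(a) + A(y)(a)A(y)(b) - A(y)(b)A(y)(a)`. -/
theorem radial_gauge_pointwise_bound
    {E : Type*} [NormedAddCommGroup E] [InnerProductSpace ℝ E]
    {𝕄 : Type*} [NormedRing 𝕄] [NormedSpace ℝ 𝕄]
    (A : E → (E →L[ℝ] 𝕄)) (hA : ContDiffOn ℝ 1 A (Metric.ball 0 1))
    (hgauge : ∀ y ∈ Metric.ball (0 : E) 1, A y y = 0)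
    (κ : ℝ) (hκ : 0 ≤ κ)
    (hF : ∀ y ∈ Metric.ball (0 : E) 1, ∀ a b : E,
      ‖(fderiv ℝ A y a) b - (fderiv ℝ A y b) a + (A y a) * (A y b) - (A y b) * (A y a)‖ ≤
        κ * ‖a‖ * ‖b‖) :
    ∀ x ∈ Metric.ball (0 : E) 1, ∀ v : E, ‖(A x) v‖ ≤ κ * ‖x‖ * ‖v‖ := by
  have hopen : IsOpen (Metric.ball (0 : E) 1) := Metric.isOpen_ball
  have hdiff : ∀ y ∈ Metric.ball (0 : E) 1, DifferentiableAt ℝ A y := fun y hy =>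
    (hA.differentiableOn one_ne_zero).differentiableAt (hopen.mem_nhds hy)
  -- differentiate the radial gauge condition
  have key : ∀ y ∈ Metric.ball (0 : E) 1, ∀ w : E,
      (fderiv ℝ A y w) y + A y w = 0 := by
    intro y hy w
    have hd : HasFDerivAt A (fderiv ℝ A y) y := (hdiff y hy).hasFDerivAt
    have hPhi : HasFDerivAt (fun z => A z z)
        ((A y).comp (ContinuousLinearMap.id ℝ E) + (fderiv ℝ A y).flip y) y :=
      hd.clm_apply (hasFDerivAt_id y)
    have hzero : HasFDerivAt (fun z : E => A z z) (0 : E →L[ℝ] 𝕄) y := by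
      refine (hasFDerivAt_const (0 : 𝕄) y).congr_of_eventuallyEq ?_
      filter_upwards [hopen.mem_nhds hy] with z hz using hgauge z hz
    have hD := hPhi.unique hzero
    have := congrArg (fun (L : E →L[ℝ] 𝕄) => L w) hD
    simpa [add_comm] using this
  have hA0 : A (0 : E) = 0 := by
    ext w
    have := key 0 (by simp) w
    simpa using this
  intro x hx v
  have hxnorm : ‖x‖ < 1 := by simpa using hx
  -- points on the segment are in the ball
  have hmem : ∀ t : ℝ, t ∈ Icc (0:ℝ) 1 → t • x ∈ Metric.ball (0 : E) 1 := by
    intro t ht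
    rw [mem_ball_zero_iff, norm_smul]
    calc ‖t‖ * ‖x‖ ≤ 1 * ‖x‖ := by
          apply mul_le_mul_of_nonneg_right _ (norm_nonneg x)
          rw [Real.norm_eq_abs, abs_le]; exact ⟨le_trans (by norm_num) ht.1, ht.2⟩
      _ < 1 := by simpa using hxnorm
  -- A (t • x) x = 0
  have hrad : ∀ t : ℝ, t ∈ Icc (0:ℝ) 1 → A (t • x) x = 0 := by
    intro t ht
    rcases eq_or_ne t 0 with rfl | hne
    · simp [hA0]
    · have h0 : A (t • x) (t • x) = 0 := hgauge _ (hmem t ht)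
      rw [map_smul] at h0
      exact (smul_eq_zero.mp h0).resolve_left hne
  set f : ℝ → 𝕄 := fun t => t • (A (t • x) v) with hf
  set F : ℝ → 𝕄 := fun t =>
    (fderiv ℝ A (t • x) x) v - (fderiv ℝ A (t • x) v) x
      + A (t • x) x * A (t • x) v - A (t • x) v * A (t • x) x with hFdef
  have hderiv : ∀ t ∈ Icc (0:ℝ) 1, HasDerivAt f (t • F t) t := by
    intro t ht
    have hmt := hmem t ht
    have hd : HasFDerivAt A (fderiv ℝ A (t • x)) (t • x) := (hdiff _ hmt).hasFDerivAt
    have hline : HasDerivAt (fun s : ℝ => s • x) x t := by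
      simpa using (hasDerivAt_id t).smul_const x
    have h1 : HasDerivAt (fun s : ℝ => A (s • x)) (fderiv ℝ A (t • x) x) t :=
      hd.comp_hasDerivAt t hline
    have h2 : HasDerivAt (fun s : ℝ => A (s • x) v) ((fderiv ℝ A (t • x) x) v) t := by
      have := h1.clm_apply (hasDerivAt_const t v)
      simpa using this
    have h3 : HasDerivAt f (t • ((fderiv ℝ A (t • x) x) v) + (1:ℝ) • (A (t • x) v)) t :=
      (hasDerivAt_id t).smul h2
    have hkey : (fderiv ℝ A (t • x) v) (t • x) + A (t • x) v = 0 := key _ hmt v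
    have heq : t • ((fderiv ℝ A (t • x) x) v) + (1:ℝ) • (A (t • x) v) = t • F t := by
      have h4 : t • ((fderiv ℝ A (t • x) v) x) = - A (t • x) v := by
        have : (fderiv ℝ A (t • x) v) (t • x) = t • ((fderiv ℝ A (t • x) v) x) :=
          map_smul _ _ _
        rw [this] at hkey
        exact eq_neg_of_add_eq_zero_left hkey
      rw [hFdef]
      simp only [hrad t ht, zero_mul, mul_zero, add_zero, sub_zero]
      rw [smul_sub, h4, one_smul, sub_neg_eq_add]
    rw [← heq]
    exact h3
  have hbound : ∀ t ∈ Ico (0:ℝ) 1, ‖t • F t‖ ≤ κ * ‖x‖ * ‖v‖ := by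
    intro t ht
    have hFb : ‖F t‖ ≤ κ * ‖x‖ * ‖v‖ := hF _ (hmem t ⟨ht.1, le_of_lt ht.2⟩) x v
    rw [norm_smul]
    calc ‖t‖ * ‖F t‖ ≤ 1 * ‖F t‖ := by
          apply mul_le_mul_of_nonneg_right _ (norm_nonneg _)
          rw [Real.norm_eq_abs, abs_le]; exact ⟨by linarith [ht.1], le_of_lt ht.2⟩
      _ = ‖F t‖ := one_mul _
      _ ≤ κ * ‖x‖ * ‖v‖ := hFb
  have := norm_image_sub_le_of_norm_deriv_le_segment'
    (fun t ht => (hderiv t ht).hasDerivWithinAt) hbound 1 (right_mem_Icc.2 zero_le_one)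
  simpa [hf] using this
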